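/- Let G be a permutation group on a finite set Ω of size n with k ≤ max(⌊(n+1)/2⌋, n−6), and suppose there is a nonempty G-invariant family E of k-subsets of Ω (a regular k-uniform hypergraph) such that every (k−1)-subset of Ω is contained in exactly d members of E. If G is (k−1)-homogeneous and k ≤ l ≤ n−d, then G does not have the (k,l)-universal transversal property. -/

import Mathlib

variable {Ω : Type*} [Fintype Ω] [DecidableEq Ω]

/-- `P` is a partition of the finite set `B` into exactly `k` nonempty parts. -/
def IsKPartition (P : Finset (Finset Ω)) (B : Finset Ω) (k : ℕ) : Prop :=
  P.card = k ∧ (∀ p ∈ P, p.Nonempty) ∧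
    (∀ p ∈ P, ∀ q ∈ P, p ≠ q → Disjoint p q) ∧ P.biUnion id = B

/-- `G` has the `(k,l)`-universal transversal property. -/
def HasUT (G : Subgroup (Equiv.Perm Ω)) (k l : ℕ) : Prop :=
  ∀ A B : Finset Ω, A.card = k → B.card = l →
    ∀ P : Finset (Finset Ω), IsKPartition P B k →
      ∃ g ∈ G, ∀ p ∈ P, ((A.image g) ∩ p).card = 1

/-- `G` is `m`-homogeneous. -/
def IsHomogeneous (G : Subgroup (Equiv.Perm Ω)) (m : ℕ) : Prop :=
  ∀ A B : Finset Ω, A.card = m → B.card = m → ∃ g ∈ G, A.image g = B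

theorem hypergraph_valency_bound (G : Subgroup (Equiv.Perm Ω)) (k l d : ℕ)
    (hk : 3 ≤ k)
    (hkmax : k ≤ max ((Fintype.card Ω + 1) / 2) (Fintype.card Ω - 6))
    (E : Finset (Finset Ω)) (hEne : E.Nonempty)
    (huniform : ∀ A ∈ E, A.card = k)
    (hinv : ∀ g ∈ G, ∀ A ∈ E, A.image g ∈ E)
    (hreg : ∀ K : Finset Ω, K.card = k - 1 → (E.filter (fun A => K ⊆ A)).card = d)
    (hhom : IsHomogeneous G (k - 1))
    (hkl : k ≤ l) (hld : l ≤ Fintype.card Ω - d) :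
    ¬ HasUT G k l := by
  intro hut
  set n := Fintype.card Ω with hn
  obtain ⟨A, hA⟩ := hEne
  have hAcard : A.card = k := huniform A hA
  have hkn : k ≤ n := hAcard ▸ Finset.card_le_univ A
  -- choose K of card k-1
  obtain ⟨K, -, hKcard⟩ := Finset.exists_subset_card_eq (s := (Finset.univ : Finset Ω)) (n := k-1)
    (by simpa using le_trans (Nat.sub_le k 1) hkn)
  -- good and bad elements outside K
  set goodX := (Finset.univ \ K).filter (fun x => insert x K ∈ E) with hgood
  set badX := (Finset.univ \ K).filter (fun x => insert x K ∉ E) with hbad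
  have hsd : (Finset.univ \ K).card = n - (k-1) := by
    rw [Finset.card_sdiff_of_subset (Finset.subset_univ K), hKcard, Finset.card_univ]
  have hgoodcard : goodX.card = d := by
    rw [← hreg K hKcard]
    apply Finset.card_bij (fun x _ => insert x K)
    · intro x hx
      simp only [hgood, Finset.mem_filter, Finset.mem_sdiff] at hx
      simp [Finset.mem_filter, hx.2, Finset.subset_insert]
    · intro x hx y hy hxy
      simp only [hgood, Finset.mem_filter, Finset.mem_sdiff] at hx hy
      have : x ∈ insert y K := hxy ▸ Finset.mem_insert_self x K
      rcases Finset.mem_insert.1 this with h | h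
      · exact h
      · exact absurd h hx.1.2
    · intro A' hA'
      simp only [Finset.mem_filter] at hA'
      obtain ⟨hA'E, hKA'⟩ := hA'
      have hA'card : A'.card = k := huniform A' hA'E
      have : (A' \ K).card = 1 := by
        rw [Finset.card_sdiff_of_subset hKA', hA'card, hKcard]; omega
      obtain ⟨x, hx⟩ := Finset.card_eq_one.1 this
      have hxA' : x ∈ A' \ K := hx ▸ Finset.mem_singleton_self x
      have hxK : x ∉ K := (Finset.mem_sdiff.1 hxA').2
      have heq : insert x K = A' := by
        apply Finset.eq_of_subset_of_card_le
        · exact Finset.insert_subset (Finset.mem_sdiff.1 hxA').1 hKA'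
        · rw [Finset.card_insert_of_notMem hxK, hKcard, hA'card]; omega
      refine ⟨x, ?_, heq⟩
      simp only [hgood, Finset.mem_filter, Finset.mem_sdiff]
      exact ⟨⟨Finset.mem_univ x, hxK⟩, heq ▸ hA'E⟩
  have hsplit : goodX.card + badX.card = n - (k-1) := by
    rw [← hsd, hgood, hbad]
    rw [Finset.card_filter_add_card_filter_not]
  have hdn : d ≤ n - (k-1) := by omega
  have hlnd : l + d ≤ n := by omega
  have hbadcard : badX.card = n - (k-1) - d := by omega
  have hlk1 : 1 ≤ l - (k-1) := by omega
  -- choose C ⊆ badX of card l - (k-1)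
  obtain ⟨C, hCbad, hCcard⟩ := Finset.exists_subset_card_eq (s := badX) (n := l - (k-1)) (by omega)
  have hCK : ∀ x ∈ C, x ∉ K := by
    intro x hx
    have := hCbad hx
    simp only [hbad, Finset.mem_filter, Finset.mem_sdiff] at this
    exact this.1.2
  have hCne : C.Nonempty := Finset.card_pos.1 (by omega)
  set B := K ∪ C with hB
  have hdisj : Disjoint K C := Finset.disjoint_left.2 (fun x hxK hxC => hCK x hxC hxK)
  have hBcard : B.card = l := by
    rw [hB, Finset.card_union_of_disjoint hdisj, hKcard, hCcard]; omega
  set P := (K.image fun x => ({x} : Finset Ω)) ∪ {C} with hP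
  have hCnotim : C ∉ K.image fun x => ({x} : Finset Ω) := by
    intro h
    obtain ⟨x, hxK, hxC⟩ := Finset.mem_image.1 h
    obtain ⟨c, hc⟩ := hCne
    have : c ∈ ({x} : Finset Ω) := hxC ▸ hc
    exact hCK c hc (Finset.mem_singleton.1 this ▸ hxK)
  have hPpart : IsKPartition P B k := by
    refine ⟨?_, ?_, ?_, ?_⟩
    · rw [hP, Finset.card_union_of_disjoint (by simpa using hCnotim),
        Finset.card_image_of_injective _ (fun a b h => Finset.singleton_injective h),
        hKcard, Finset.card_singleton]
      omega
    · intro p hp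
      rw [hP, Finset.mem_union] at hp
      rcases hp with hp | hp
      · obtain ⟨x, _, rfl⟩ := Finset.mem_image.1 hp
        exact Finset.singleton_nonempty x
      · rw [Finset.mem_singleton.1 hp]; exact hCne
    · intro p hp q hq hpq
      rw [hP, Finset.mem_union] at hp hq
      rcases hp with hp | hp <;> rcases hq with hq | hq
      · obtain ⟨x, hx, rfl⟩ := Finset.mem_image.1 hp
        obtain ⟨y, hy, rfl⟩ := Finset.mem_image.1 hq
        simp only [Finset.disjoint_singleton_left, Finset.mem_singleton]
        intro h; exact hpq (by rw [h])
      · obtain ⟨x, hx, rfl⟩ := Finset.mem_image.1 hp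
        rw [Finset.mem_singleton.1 hq]
        exact Finset.disjoint_singleton_left.2 (fun h => hCK x h hx)
      · obtain ⟨y, hy, rfl⟩ := Finset.mem_image.1 hq
        rw [Finset.mem_singleton.1 hp]
        exact Finset.disjoint_singleton_right.2 (fun h => hCK y h hy)
      · rw [Finset.mem_singleton.1 hp, Finset.mem_singleton.1 hq] at hpq
        exact absurd rfl hpq
    · rw [hP, hB]
      ext x
      simp only [Finset.mem_biUnion, Finset.mem_union, Finset.mem_image, id,
        Finset.mem_singleton]
      constructor
      · rintro ⟨p, hp | hp, hx⟩
        · obtain ⟨y, hy, rfl⟩ := hp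
          exact Or.inl (Finset.mem_singleton.1 hx ▸ hy)
        · exact Or.inr (hp ▸ hx)
      · rintro (hx | hx)
        · exact ⟨{x}, Or.inl ⟨x, hx, rfl⟩, Finset.mem_singleton_self x⟩
        · exact ⟨C, Or.inr rfl, hx⟩
  obtain ⟨g, hgG, hg⟩ := hut A B hAcard hBcard P hPpart
  set A' := A.image g with hA'
  have hA'E : A' ∈ E := hinv g hgG A hA
  have hA'card : A'.card = k := huniform A' hA'E
  have hKA' : K ⊆ A' := by
    intro x hx
    have hmem : ({x} : Finset Ω) ∈ P := by
      rw [hP, Finset.mem_union]; left; exact Finset.mem_image_of_mem _ hx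
    have h1 := hg _ hmem
    by_contra hxA'
    rw [Finset.inter_singleton_of_notMem hxA'] at h1
    simp at h1
  have hCP : C ∈ P := by rw [hP, Finset.mem_union]; right; exact Finset.mem_singleton_self C
  have h1 := hg _ hCP
  obtain ⟨x, hx⟩ := Finset.card_eq_one.1 h1
  have hxA'C : x ∈ A' ∩ C := hx ▸ Finset.mem_singleton_self x
  rw [Finset.mem_inter] at hxA'C
  have hxbad := hCbad hxA'C.2
  simp only [hbad, Finset.mem_filter, Finset.mem_sdiff] at hxbad
  have hxK : x ∉ K := hxbad.1.2
  have heq : insert x K = A' := by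
    apply Finset.eq_of_subset_of_card_le
    · exact Finset.insert_subset hxA'C.1 hKA'
    · rw [Finset.card_insert_of_notMem hxK, hKcard, hA'card]; omega
  exact hxbad.2 (heq ▸ hA'E)
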